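/- There exists a constant C > 0 such that for every real μ ≥ 1/2 and every real r ≥ 1, one has K_μ(r) ≤ C · e^{-r/2} r^{-μ} · 2^{2μ} Γ(μ). -/

import Mathlib

set_option maxHeartbeats 1000000

open Real

/-- The modified Bessel function of the second kind, via the integral representation
`K_μ(r) = (π^{1/2} 2^{-μ} r^{μ} / Γ(μ + 1/2)) · ∫_{1}^{∞} e^{-rt} (t² - 1)^{μ - 1/2} dt`. -/
noncomputable def besselK (μ r : ℝ) : ℝ :=
  (Real.sqrt π * 2 ^ (-μ) * r ^ μ / Real.Gamma (μ + 1 / 2)) *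
    ∫ t in Set.Ioi (1 : ℝ), Real.exp (-r * t) * (t ^ 2 - 1) ^ (μ - 1 / 2)

open MeasureTheory in
/-- There is `C > 0` such that for all `μ ≥ 1/2` and `r ≥ 1`,
`K_μ(r) ≤ C · e^{-r/2} r^{-μ} 2^{2μ} Γ(μ)`. -/
theorem statement10 :
    ∃ C : ℝ, 0 < C ∧ ∀ μ r : ℝ, 1 / 2 ≤ μ → 1 ≤ r →
      besselK μ r ≤ C * Real.exp (-r / 2) * r ^ (-μ) * 2 ^ (2 * μ) * Real.Gamma μ := by
  refine ⟨1, one_pos, fun μ r hμ hr => ?_⟩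
  have hr0 : (0 : ℝ) < r := lt_of_lt_of_le one_pos hr
  have hμ0 : (0 : ℝ) < μ := lt_of_lt_of_le (by norm_num) hμ
  have hΓh : 0 < Real.Gamma (μ + 1 / 2) := Real.Gamma_pos_of_pos (by linarith)
  have hΓμ : 0 < Real.Gamma μ := Real.Gamma_pos_of_pos hμ0
  have h2μ : (0 : ℝ) < 2 * μ := by linarith
  set h : ℝ → ℝ := fun u => u ^ (2 * μ - 1) * Real.exp (-(r * u)) with hh
  -- integrability of h on Ioi 0
  have hint0 : IntegrableOn h (Set.Ioi 0) := by
    have := integrableOn_rpow_mul_exp_neg_mul_rpow (s := 2 * μ - 1) (p := 1) (b := r)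
      (by linarith) one_pos hr0
    simpa [hh, neg_mul] using this
  have hint : IntegrableOn h (Set.Ioi (1 / 2 : ℝ)) :=
    hint0.mono_set (Set.Ioi_subset_Ioi (by norm_num))
  -- nonnegativity of h
  have hnn : ∀ u : ℝ, 0 < u → 0 ≤ h u := fun u hu => by positivity
  -- the shift map
  have hmp : MeasurePreserving (fun x : ℝ => x - 1 / 2) volume volume :=
    measurePreserving_sub_right volume (1 / 2)
  have hemb : MeasurableEmbedding (fun x : ℝ => x - 1 / 2) :=
    (MeasurableEquiv.subRight ((1 : ℝ) / 2)).measurableEmbedding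
  have hpre : (fun x : ℝ => x - 1 / 2) ⁻¹' Set.Ioi (1 / 2) = Set.Ioi 1 := by
    ext x
    simp only [Set.mem_preimage, Set.mem_Ioi]
    constructor <;> intro <;> linarith
  have hshift : ∫ t in Set.Ioi (1 : ℝ), h (t - 1 / 2) = ∫ u in Set.Ioi (1 / 2 : ℝ), h u := by
    rw [← hpre]
    exact hmp.setIntegral_preimage_emb hemb h _
  have hintshift : IntegrableOn (fun t => h (t - 1 / 2)) (Set.Ioi 1) := by
    have := (hmp.integrableOn_comp_preimage hemb (f := h) (s := Set.Ioi (1 / 2 : ℝ))).mpr hint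
    rw [hpre] at this
    exact this
  -- bound the integral
  have key : (∫ t in Set.Ioi (1 : ℝ), Real.exp (-r * t) * (t ^ 2 - 1) ^ (μ - 1 / 2)) ≤
      Real.exp (-r / 2) * 2 ^ (μ - 1 / 2) * ((1 / r) ^ (2 * μ) * Real.Gamma (2 * μ)) := by
    have step1 : (∫ t in Set.Ioi (1 : ℝ), Real.exp (-r * t) * (t ^ 2 - 1) ^ (μ - 1 / 2)) ≤
        ∫ t in Set.Ioi (1 : ℝ), Real.exp (-r / 2) * 2 ^ (μ - 1 / 2) * h (t - 1 / 2) := by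
      refine integral_mono_of_nonneg ?_ ((hintshift.const_mul _)) ?_
      · filter_upwards [self_mem_ae_restrict (measurableSet_Ioi : MeasurableSet (Set.Ioi (1:ℝ)))]
          with t ht
        have ht1 : (1 : ℝ) < t := ht
        have : (0 : ℝ) ≤ t ^ 2 - 1 := by nlinarith
        positivity
      · filter_upwards [self_mem_ae_restrict (measurableSet_Ioi : MeasurableSet (Set.Ioi (1:ℝ)))]
          with t ht
        have ht1 : (1 : ℝ) < t := ht
        have htq : (0 : ℝ) ≤ t ^ 2 - 1 := by nlinarith
        have hts : (0 : ℝ) ≤ t - 1 / 2 := by linarith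
        have hexp : Real.exp (-r * t) = Real.exp (-r / 2) * Real.exp (-(r * (t - 1 / 2))) := by
          rw [← Real.exp_add]; ring_nf
        have hbase : t ^ 2 - 1 ≤ 2 * (t - 1 / 2) ^ 2 := by nlinarith [sq_nonneg (t - 1)]
        have hpow : (t ^ 2 - 1) ^ (μ - 1 / 2) ≤ 2 ^ (μ - 1 / 2) * (t - 1 / 2) ^ (2 * μ - 1) := by
          calc (t ^ 2 - 1) ^ (μ - 1 / 2) ≤ (2 * (t - 1 / 2) ^ 2) ^ (μ - 1 / 2) :=
                Real.rpow_le_rpow htq hbase (by linarith)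
            _ = 2 ^ (μ - 1 / 2) * ((t - 1 / 2) ^ 2) ^ (μ - 1 / 2) :=
                Real.mul_rpow (by norm_num) (by positivity)
            _ = 2 ^ (μ - 1 / 2) * (t - 1 / 2) ^ (2 * μ - 1) := by
                rw [show (2 : ℝ) * μ - 1 = 2 * (μ - 1 / 2) by ring, Real.rpow_mul hts,
                  Real.rpow_two]
        calc Real.exp (-r * t) * (t ^ 2 - 1) ^ (μ - 1 / 2)
            ≤ Real.exp (-r * t) * (2 ^ (μ - 1 / 2) * (t - 1 / 2) ^ (2 * μ - 1)) :=
              mul_le_mul_of_nonneg_left hpow (Real.exp_pos _).le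
          _ = Real.exp (-r / 2) * 2 ^ (μ - 1 / 2) * h (t - 1 / 2) := by
              rw [hexp]; simp only [hh]; ring
    have step2 : (∫ t in Set.Ioi (1 : ℝ), Real.exp (-r / 2) * 2 ^ (μ - 1 / 2) * h (t - 1 / 2)) =
        Real.exp (-r / 2) * 2 ^ (μ - 1 / 2) * ∫ u in Set.Ioi (1 / 2 : ℝ), h u := by
      rw [MeasureTheory.integral_const_mul, hshift]
    have step3 : (∫ u in Set.Ioi (1 / 2 : ℝ), h u) ≤ ∫ u in Set.Ioi (0 : ℝ), h u := by
      refine setIntegral_mono_set hint0 ?_ (HasSubset.Subset.eventuallyLE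
        (Set.Ioi_subset_Ioi (by norm_num)))
      filter_upwards [self_mem_ae_restrict (measurableSet_Ioi : MeasurableSet (Set.Ioi (0:ℝ)))]
        with u hu
      exact hnn u hu
    have step4 : (∫ u in Set.Ioi (0 : ℝ), h u) = (1 / r) ^ (2 * μ) * Real.Gamma (2 * μ) :=
      Real.integral_rpow_mul_exp_neg_mul_Ioi h2μ hr0
    calc (∫ t in Set.Ioi (1 : ℝ), Real.exp (-r * t) * (t ^ 2 - 1) ^ (μ - 1 / 2))
        ≤ ∫ t in Set.Ioi (1 : ℝ), Real.exp (-r / 2) * 2 ^ (μ - 1 / 2) * h (t - 1 / 2) := step1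
      _ = Real.exp (-r / 2) * 2 ^ (μ - 1 / 2) * ∫ u in Set.Ioi (1 / 2 : ℝ), h u := step2
      _ ≤ Real.exp (-r / 2) * 2 ^ (μ - 1 / 2) * ((1 / r) ^ (2 * μ) * Real.Gamma (2 * μ)) := by
          rw [← step4]
          exact mul_le_mul_of_nonneg_left step3 (by positivity)
  -- assemble
  have hP : 0 ≤ Real.sqrt π * 2 ^ (-μ) * r ^ μ / Real.Gamma (μ + 1 / 2) := by positivity
  have hK : besselK μ r ≤ (Real.sqrt π * 2 ^ (-μ) * r ^ μ / Real.Gamma (μ + 1 / 2)) *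
      (Real.exp (-r / 2) * 2 ^ (μ - 1 / 2) * ((1 / r) ^ (2 * μ) * Real.Gamma (2 * μ))) :=
    mul_le_mul_of_nonneg_left key hP
  refine hK.trans ?_
  -- final algebra using the duplication formula
  have hdup := Real.Gamma_mul_Gamma_add_half μ
  have hπ : (0 : ℝ) < Real.sqrt π := Real.sqrt_pos.mpr Real.pi_pos
  have hG2 : Real.Gamma (2 * μ) =
      Real.Gamma μ * Real.Gamma (μ + 1 / 2) / ((2 : ℝ) ^ (1 - 2 * μ) * Real.sqrt π) := by
    rw [hdup]; field_simp
  rw [hG2]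
  have h1r : ((1 : ℝ) / r) ^ (2 * μ) = r ^ (-(2 * μ)) := by
    rw [one_div, Real.inv_rpow hr0.le, ← Real.rpow_neg hr0.le]
  rw [h1r]
  have hrpow : r ^ μ * r ^ (-(2 * μ)) = r ^ (-μ) := by
    rw [← Real.rpow_add hr0]; ring_nf
  have h2pow : (2 : ℝ) ^ (-μ) * 2 ^ (μ - 1 / 2) / 2 ^ (1 - 2 * μ) =
      2 ^ (2 * μ) * 2 ^ (-(3 / 2) : ℝ) := by
    rw [← Real.rpow_add two_pos, ← Real.rpow_add two_pos, ← Real.rpow_sub two_pos]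
    ring_nf
  have h2ne : ((2 : ℝ) ^ (1 - 2 * μ)) ≠ 0 := (Real.rpow_pos_of_pos two_pos _).ne'
  have hexpand : Real.sqrt π * 2 ^ (-μ) * r ^ μ / Real.Gamma (μ + 1 / 2) *
      (Real.exp (-r / 2) * 2 ^ (μ - 1 / 2) *
        (r ^ (-(2 * μ)) * (Real.Gamma μ * Real.Gamma (μ + 1 / 2) /
          ((2 : ℝ) ^ (1 - 2 * μ) * Real.sqrt π)))) =
      2 ^ (-μ) * 2 ^ (μ - 1 / 2) / 2 ^ (1 - 2 * μ) * Real.exp (-r / 2) *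
        (r ^ μ * r ^ (-(2 * μ))) * Real.Gamma μ := by
    field_simp
  rw [hexpand, hrpow, h2pow]
  have h32 : (2 : ℝ) ^ (-(3 / 2) : ℝ) ≤ 1 := by
    rw [show (1 : ℝ) = (2 : ℝ) ^ (0 : ℝ) by simp]
    exact Real.rpow_le_rpow_of_exponent_le one_le_two (by norm_num)
  have hA : (0 : ℝ) ≤ Real.exp (-r / 2) * r ^ (-μ) * 2 ^ (2 * μ) * Real.Gamma μ := by positivity
  nlinarith [mul_le_mul_of_nonneg_right h32 hA]
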